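/- There exist noncongruent convex bodies K and L in ℝⁿ, each containing the closed Euclidean ball of radius t > 0 in its interior, such that for all 1 ≤ i ≤ n and every unit vector ξ, the intrinsic volumes of the slab truncations agree: V_i(K ∩ S_t(ξ)) = V_i(L ∩ S_t(ξ)), where S_t(ξ) = {x : |⟨x,ξ⟩| ≤ t}. -/

import Mathlib

open Set MeasureTheory Pointwise RealInnerProductSpace

/-- The volume of the `j`-dimensional Euclidean unit ball. -/
noncomputable def kball (j : ℕ) : ℝ :=
  (volume (Metric.closedBall (0 : EuclideanSpace ℝ (Fin j)) 1)).toReal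

/-- `Vfun` is the family of intrinsic volumes: it satisfies Steiner's formula
`vol_n(A + ε B₂ⁿ) = ∑_{i=0}^n κ_{n-i} V_i(A) ε^{n-i}` for every nonempty compact
convex set `A` and every `ε ≥ 0`. -/
def IsIntrinsicVolumes {n : ℕ} (Vfun : ℕ → Set (EuclideanSpace ℝ (Fin n)) → ℝ) : Prop :=
  ∀ A : Set (EuclideanSpace ℝ (Fin n)), IsCompact A → Convex ℝ A → A.Nonempty →
    ∀ ε : ℝ, 0 ≤ ε →
      (volume (A + ε • Metric.closedBall (0 : EuclideanSpace ℝ (Fin n)) 1)).toReal =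
        ∑ i ∈ Finset.range (n + 1), kball (n - i) * Vfun i A * ε ^ (n - i)

/-- The slab of width `2t` perpendicular to `ξ`. -/
def slab {n : ℕ} (t : ℝ) (ξ : EuclideanSpace ℝ (Fin n)) : Set (EuclideanSpace ℝ (Fin n)) :=
  {x : EuclideanSpace ℝ (Fin n) | |⟪x, ξ⟫| ≤ t}

/-! ### Auxiliary material -/

section Aux

open Filter Topology Polynomial

/-- For closed sets `C`, `D` whose union is convex, Minkowski addition by a convex set
distributes over the intersection. -/
theorem inter_add_of_union_convex {E : Type*} [NormedAddCommGroup E] [NormedSpace ℝ E]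
    {C D M : Set E} (hCc : IsClosed C) (hDc : IsClosed D)
    (hU : Convex ℝ (C ∪ D)) (hM : Convex ℝ M) :
    (C + M) ∩ (D + M) = (C ∩ D) + M := by
  apply Subset.antisymm
  · rintro x ⟨⟨c, hc, m₁, hm₁, rfl⟩, ⟨d, hd, m₂, hm₂, hx⟩⟩
    have hseg : ∀ lam : ℝ, lam ∈ Icc (0:ℝ) 1 → (1 - lam) • c + lam • d ∈ C ∪ D := by
      intro lam hlam
      exact hU (mem_union_left _ hc) (mem_union_right _ hd)
        (by linarith [hlam.2]) hlam.1 (by ring)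
    set φ : ℝ → E := fun lam => (1 - lam) • c + lam • d with hφ
    have hφc : Continuous φ := by fun_prop
    set S : Set ℝ := {lam ∈ Icc (0:ℝ) 1 | φ lam ∈ C} with hS
    have hS0 : (0:ℝ) ∈ S := by
      refine ⟨⟨le_refl _, zero_le_one⟩, ?_⟩
      simp [hφ, hc]
    have hSne : S.Nonempty := ⟨0, hS0⟩
    have hSclosed : IsClosed S := by
      have : S = Icc (0:ℝ) 1 ∩ φ ⁻¹' C := by ext y; simp [hS, and_comm]
      rw [this]
      exact isClosed_Icc.inter (hCc.preimage hφc)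
    have hSbdd : BddAbove S := ⟨1, fun y hy => hy.1.2⟩
    set lam := sSup S with hlam
    have hlamS : lam ∈ S := hSclosed.csSup_mem hSne hSbdd
    have hlam01 : lam ∈ Icc (0:ℝ) 1 := hlamS.1
    have hφlamC : φ lam ∈ C := hlamS.2
    have hφlamD : φ lam ∈ D := by
      rcases eq_or_lt_of_le hlam01.2 with h1 | h1
      · have hd' : φ lam = d := by rw [h1]; simp [hφ]
        rw [hd']; exact hd
      · have hmem : ∀ y ∈ Ioc lam 1, φ y ∈ D := by
          intro y hy
          have hyIcc : y ∈ Icc (0:ℝ) 1 := ⟨le_trans hlam01.1 hy.1.le, hy.2⟩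
          rcases hseg y hyIcc with h | h
          · exact absurd (le_csSup hSbdd ⟨hyIcc, h⟩) (not_le.mpr hy.1)
          · exact h
        have hne : (𝓝[Ioc lam 1] lam).NeBot := by
          rw [← mem_closure_iff_nhdsWithin_neBot, closure_Ioc h1.ne]
          exact ⟨le_refl _, h1.le⟩
        exact hDc.mem_of_tendsto (hφc.continuousAt.continuousWithinAt.tendsto)
          (Filter.eventually_of_mem self_mem_nhdsWithin hmem)
    have hx' : d + m₂ = c + m₁ := hx
    refine ⟨φ lam, ⟨hφlamC, hφlamD⟩, (1 - lam) • m₁ + lam • m₂, ?_, ?_⟩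
    · exact hM hm₁ hm₂ (by linarith [hlam01.2]) hlam01.1 (by ring)
    · show φ lam + ((1 - lam) • m₁ + lam • m₂) = c + m₁
      calc φ lam + ((1 - lam) • m₁ + lam • m₂)
          = (1 - lam) • (c + m₁) + lam • (d + m₂) := by simp only [hφ]; module
        _ = (1 - lam) • (c + m₁) + lam • (c + m₁) := by rw [hx']
        _ = c + m₁ := by module
  · rintro x ⟨e, he, m, hm, rfl⟩
    exact ⟨⟨e, he.1, m, hm, rfl⟩, ⟨e, he.2, m, hm, rfl⟩⟩

/-- Two polynomial expansions valid on `[0, ∞)` have equal coefficients. -/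
theorem coeff_eq_of_sum_eq {n : ℕ} (f g : ℕ → ℝ)
    (h : ∀ ε : ℝ, 0 ≤ ε → ∑ i ∈ Finset.range (n + 1), f i * ε ^ (n - i)
      = ∑ i ∈ Finset.range (n + 1), g i * ε ^ (n - i)) :
    ∀ i, i ≤ n → f i = g i := by
  intro i hi
  set P : Polynomial ℝ := ∑ j ∈ Finset.range (n + 1), C (f j) * X ^ (n - j) with hP
  set Q : Polynomial ℝ := ∑ j ∈ Finset.range (n + 1), C (g j) * X ^ (n - j) with hQ
  have heval : ∀ ε : ℝ, 0 ≤ ε → P.eval ε = Q.eval ε := by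
    intro ε hε
    simp only [hP, hQ, eval_finset_sum, eval_mul, eval_C, eval_pow, eval_X]
    exact h ε hε
  have hPQ : P = Q := by
    apply Polynomial.eq_of_infinite_eval_eq
    apply Set.Infinite.mono (s := Set.Ici (0:ℝ))
    · intro x hx; exact heval x hx
    · exact Set.Ici_infinite 0
  have hco : ∀ (u : ℕ → ℝ), (∑ j ∈ Finset.range (n + 1), C (u j) * X ^ (n - j)).coeff (n - i)
      = u i := by
    intro u
    rw [Polynomial.finset_sum_coeff]
    rw [Finset.sum_eq_single i]
    · simp [Polynomial.coeff_C_mul, Polynomial.coeff_X_pow]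
    · intro j hj hji
      simp only [Polynomial.coeff_C_mul, Polynomial.coeff_X_pow]
      rw [if_neg, mul_zero]
      intro hee
      apply hji
      have hj' : j ≤ n := Nat.lt_succ_iff.mp (Finset.mem_range.mp hj)
      omega
    · intro hii
      exact absurd (Finset.mem_range.mpr (Nat.lt_succ_iff.mpr hi)) hii
  have := congrArg (fun p => Polynomial.coeff p (n - i)) hPQ
  simpa [hP, hQ, hco] using this

theorem kball_pos (j : ℕ) : 0 < kball j :=
  ENNReal.toReal_pos (Metric.measure_closedBall_pos _ _ one_pos).ne'
    (isCompact_closedBall _ _).measure_lt_top.ne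

end Aux

noncomputable section Geom
variable {n : ℕ}
local notation "E" => EuclideanSpace ℝ (Fin n)

/-- The halfspace `⟨x, u⟩ ≤ 19/2`. -/
def Hspace {n : ℕ} (u : EuclideanSpace ℝ (Fin n)) : Set (EuclideanSpace ℝ (Fin n)) :=
  {x : EuclideanSpace ℝ (Fin n) | ⟪x, u⟫ ≤ 19/2}

theorem isClosed_Hspace (u : E) : IsClosed (Hspace u) :=
  isClosed_le (continuous_id.inner continuous_const) continuous_const

theorem convex_Hspace (u : E) : Convex ℝ (Hspace u) := by
  intro x hx y hy a b ha hb hab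
  simp only [Hspace, mem_setOf_eq] at *
  rw [inner_add_left, real_inner_smul_left, real_inner_smul_left]
  nlinarith [hx, hy]

theorem isClosed_slab (t : ℝ) (ξ : E) : IsClosed (slab t ξ) :=
  isClosed_le ((continuous_id.inner continuous_const).abs) continuous_const

theorem convex_slab (t : ℝ) (ξ : E) : Convex ℝ (slab t ξ) := by
  intro x hx y hy a b ha hb hab
  simp only [slab, mem_setOf_eq] at *
  rw [inner_add_left, real_inner_smul_left, real_inner_smul_left]
  calc |a * ⟪x,ξ⟫ + b * ⟪y,ξ⟫| ≤ |a * ⟪x,ξ⟫| + |b * ⟪y,ξ⟫| := abs_add_le _ _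
    _ = a * |⟪x,ξ⟫| + b * |⟪y,ξ⟫| := by rw [abs_mul, abs_mul, abs_of_nonneg ha, abs_of_nonneg hb]
    _ ≤ a * t + b * t := add_le_add (mul_le_mul_of_nonneg_left hx ha)
        (mul_le_mul_of_nonneg_left hy hb)
    _ = t := by rw [← add_mul, hab, one_mul]

/-- The key measure identity: inclusion-exclusion for the `M`-neighborhood of the
body cut by the two halfspaces, intersected with a slab. -/
theorem vol_inter_add (ξ : E) (u v : E)
    (hcover : ∀ x : E, ‖x‖ ≤ 10 → ⟪x, u⟫ ≤ 19/2 ∨ ⟪x, v⟫ ≤ 19/2)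
    (M : Set E) (hMconv : Convex ℝ M) (hMcomp : IsCompact M) :
    volume ((Metric.closedBall (0:E) 10 ∩ Hspace u ∩ Hspace v ∩ slab 1 ξ) + M)
      + volume ((Metric.closedBall (0:E) 10 ∩ slab 1 ξ) + M)
    = volume ((Metric.closedBall (0:E) 10 ∩ slab 1 ξ ∩ Hspace u) + M)
      + volume ((Metric.closedBall (0:E) 10 ∩ slab 1 ξ ∩ Hspace v) + M) := by
  set A : Set E := Metric.closedBall (0:E) 10 ∩ slab 1 ξ with hA
  set C : Set E := A ∩ Hspace u with hC
  set D : Set E := A ∩ Hspace v with hD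
  have hCclosed : IsClosed C := (Metric.isClosed_closedBall.inter (isClosed_slab 1 ξ)).inter
    (isClosed_Hspace u)
  have hDclosed : IsClosed D := (Metric.isClosed_closedBall.inter (isClosed_slab 1 ξ)).inter
    (isClosed_Hspace v)
  have hCD : C ∪ D = A := by
    apply Subset.antisymm
    · exact union_subset inter_subset_left inter_subset_left
    · intro x hx
      have hx10 : ‖x‖ ≤ 10 := by
        have := hx.1; rwa [Metric.mem_closedBall, dist_zero_right] at this
      rcases hcover x hx10 with h | h
      · exact mem_union_left _ ⟨hx, h⟩
      · exact mem_union_right _ ⟨hx, h⟩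
  have hUconv : Convex ℝ (C ∪ D) := by
    rw [hCD]; exact (convex_closedBall _ _).inter (convex_slab 1 ξ)
  have hkey : (C + M) ∩ (D + M) = (C ∩ D) + M :=
    inter_add_of_union_convex hCclosed hDclosed hUconv hMconv
  have hBallcomp : IsCompact (Metric.closedBall (0:E) 10) := isCompact_closedBall _ _
  have hCcomp : IsCompact C := hBallcomp.of_isClosed_subset hCclosed
    (hC ▸ (inter_subset_left.trans inter_subset_left))
  have hDcomp : IsCompact D := hBallcomp.of_isClosed_subset hDclosed
    (hD ▸ (inter_subset_left.trans inter_subset_left))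
  have hmeas : MeasurableSet (D + M) := (hDcomp.add hMcomp).isClosed.measurableSet
  have h1 := measure_union_add_inter (μ := volume) (C + M) hmeas
  rw [hkey, ← Set.union_add, hCD] at h1
  have hKS : Metric.closedBall (0:E) 10 ∩ Hspace u ∩ Hspace v ∩ slab 1 ξ = C ∩ D := by
    simp only [hC, hD, hA]; ext x
    simp only [mem_inter_iff]; tauto
  rw [hKS]
  rw [add_comm (volume (C + M)) (volume (D + M))] at h1 ⊢
  rw [← h1, add_comm]

theorem cover_of_inner (u v : E) (huu : ⟪u,u⟫ = 1) (hvv : ⟪v,v⟫ = 1) (huv : ⟪u,v⟫ ≤ 4/5) :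
    ∀ x : E, ‖x‖ ≤ 10 → ⟪x, u⟫ ≤ 19/2 ∨ ⟪x, v⟫ ≤ 19/2 := by
  intro x hx
  by_contra h
  push_neg at h
  have h1 : ⟪x, u + v⟫ > 19 := by rw [inner_add_right]; linarith [h.1, h.2]
  have h2 := real_inner_mul_inner_self_le x (u + v)
  have h3 : ⟪u + v, u + v⟫ ≤ 18/5 := by
    rw [inner_add_right, inner_add_left, inner_add_left]
    have := real_inner_comm v u
    linarith
  have h4 : ⟪x, x⟫ ≤ 100 := by
    rw [real_inner_self_eq_norm_sq]; nlinarith [norm_nonneg x]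
  nlinarith [real_inner_self_nonneg (x := x), real_inner_self_nonneg (x := u + v)]

theorem inner_single_single' (i j : Fin n) (a b : ℝ) :
    ⟪(EuclideanSpace.single i a : E), EuclideanSpace.single j b⟫ = if i = j then a * b else 0 := by
  rw [EuclideanSpace.inner_single_left, EuclideanSpace.single_apply]
  rcases eq_or_ne i j with h | h
  · simp [h]
  · simp [h, Ne.symm h]

theorem norm_eq_of_inner_self {x : E} {c : ℝ} (hc : 0 ≤ c) (h : ⟪x,x⟫ = c * c) : ‖x‖ = c := by
  have h2 : ⟪x,x⟫ = ‖x‖ * ‖x‖ := real_inner_self_eq_norm_mul_norm x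
  nlinarith [norm_nonneg x]

theorem normsq_sub (x y : E) : ‖x - y‖^2 = ⟪x,x⟫ - 2*⟪x,y⟫ + ⟪y,y⟫ := by
  rw [norm_sub_sq_real, real_inner_self_eq_norm_sq, real_inner_self_eq_norm_sq]

theorem arith1 {r s t : ℝ} (hr : r^2 = 4/5) (hs : s^2 < 1/10) (ht : t^2 < 1/10)
    (hr0 : 0 ≤ r) (hs0 : 0 ≤ s) (ht0 : 0 ≤ t) (htri : r ≤ s + t) : False := by
  have h1 : r^2 ≤ (s+t)^2 :=
    by nlinarith [mul_nonneg (sub_nonneg.mpr htri) (by linarith : (0:ℝ) ≤ s + t + r)]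
  nlinarith [sq_nonneg (s - t)]

theorem arith2 {g r s t : ℝ} (hg : g^2 = 16/5) (hr : r^2 = 4/5) (hs : s^2 < 1/10)
    (ht : t^2 < 1/10) (hg0 : 0 ≤ g) (hs0 : 0 ≤ s) (ht0 : 0 ≤ t) (hr0 : 0 ≤ r)
    (htri : g ≤ s + r + t) : False := by
  have h1 : g^2 ≤ (s+r+t)^2 :=
    by nlinarith [mul_nonneg (sub_nonneg.mpr htri) (by linarith : (0:ℝ) ≤ s + r + t + g)]
  nlinarith [sq_nonneg (s - r), sq_nonneg (s - t), sq_nonneg (r - t)]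

/-- The two bodies are not congruent. -/
theorem noncongruent (u1 u2 w : E)
    (h11 : ⟪u1,u1⟫ = 1) (h22 : ⟪u2,u2⟫ = 1) (h12 : ⟪u1,u2⟫ = 3/5)
    (hw1 : ⟪w,u1⟫ = 0) (hw2 : ⟪w,u2⟫ = 8) (hww : ⟪w,w⟫ = 100) :
    ¬ ∃ T : (EuclideanSpace ℝ (Fin n)) ≃ᵢ (EuclideanSpace ℝ (Fin n)),
      T '' (Metric.closedBall (0:E) 10 ∩ Hspace u1 ∩ Hspace u2)
        = Metric.closedBall (0:E) 10 ∩ Hspace u1 ∩ Hspace (-u2) := by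
  rintro ⟨T, hT⟩
  set K : Set E := Metric.closedBall (0:E) 10 ∩ Hspace u1 ∩ Hspace u2 with hK
  set L : Set E := Metric.closedBall (0:E) 10 ∩ Hspace u1 ∩ Hspace (-u2) with hL
  have hwnorm : ‖w‖ = 10 := norm_eq_of_inner_self (by norm_num) (by rw [hww]; norm_num)
  have hwK : w ∈ K := by
    refine ⟨⟨?_, ?_⟩, ?_⟩
    · rw [Metric.mem_closedBall, dist_zero_right, hwnorm]
    · show ⟪w,u1⟫ ≤ 19/2; rw [hw1]; norm_num
    · show ⟪w,u2⟫ ≤ 19/2; rw [hw2]; norm_num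
  have hwK' : -w ∈ K := by
    refine ⟨⟨?_, ?_⟩, ?_⟩
    · rw [Metric.mem_closedBall, dist_zero_right, norm_neg, hwnorm]
    · show ⟪-w,u1⟫ ≤ 19/2; rw [inner_neg_left, hw1]; norm_num
    · show ⟪-w,u2⟫ ≤ 19/2; rw [inner_neg_left, hw2]; norm_num
  have hLball : L ⊆ Metric.closedBall (0:E) 10 := fun x hx => hx.1.1
  set a : E := T w with ha
  set b : E := T (-w) with hb
  set c : E := T 0 with hc
  have haL : a ∈ L := hT ▸ mem_image_of_mem T hwK
  have hbL : b ∈ L := hT ▸ mem_image_of_mem T hwK'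
  have hanorm : ‖a‖ ≤ 10 := by
    have := hLball haL; rwa [Metric.mem_closedBall, dist_zero_right] at this
  have hbnorm : ‖b‖ ≤ 10 := by
    have := hLball hbL; rwa [Metric.mem_closedBall, dist_zero_right] at this
  have habd : ‖a - b‖ = 20 := by
    rw [← dist_eq_norm, ha, hb, T.dist_eq, dist_eq_norm, sub_neg_eq_add]
    exact norm_eq_of_inner_self (by norm_num)
      (by rw [inner_add_left, inner_add_right, hww]; norm_num)
  have habzero : a + b = 0 := by
    have hpl := parallelogram_law_with_norm ℝ a b
    have : ‖a + b‖ * ‖a + b‖ ≤ 0 := by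
      rw [habd] at hpl
      nlinarith [mul_self_le_mul_self (norm_nonneg a) hanorm,
        mul_self_le_mul_self (norm_nonneg b) hbnorm]
    have h0 : ‖a + b‖ * ‖a + b‖ = 0 := le_antisymm this (mul_self_nonneg _)
    exact norm_eq_zero.mp (mul_self_eq_zero.mp h0)
  have hca : ‖c - a‖ = 10 := by
    rw [← dist_eq_norm, hc, ha, T.dist_eq, dist_eq_norm, zero_sub, norm_neg, hwnorm]
  have hcb : ‖c - b‖ = 10 := by
    rw [← dist_eq_norm, hc, hb, T.dist_eq, dist_eq_norm, zero_sub, norm_neg, norm_neg, hwnorm]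
  have hT0 : T 0 = 0 := by
    have hpl := parallelogram_law_with_norm ℝ (c - a) (c - b)
    have he1 : (c - a) - (c - b) = b - a := by abel
    have he2 : (c - a) + (c - b) = c + c - (a + b) := by abel
    rw [he1, he2, habzero, sub_zero, hca, hcb, norm_sub_rev, habd] at hpl
    have h00 : ‖c + c‖ * ‖c + c‖ = 0 := le_antisymm (by nlinarith) (mul_self_nonneg _)
    have hcc : c + c = 0 := norm_eq_zero.mp (mul_self_eq_zero.mp h00)
    have h2c : (2:ℝ) • c = 0 := by rw [two_smul]; exact hcc
    rcases smul_eq_zero.mp h2c with h | h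
    · norm_num at h
    · exact h
  set f := T.toRealLinearIsometryEquivOfMapZero hT0 with hf
  have hfT : ∀ x : E, f x = T x := fun x => rfl
  set p : E := f u1 with hp
  set q : E := f u2 with hq
  have hpp : ⟪p,p⟫ = 1 := by rw [hp, f.inner_map_map, h11]
  have hqq : ⟪q,q⟫ = 1 := by rw [hq, f.inner_map_map, h22]
  have hpq : ⟪p,q⟫ = 3/5 := by rw [hp, hq, f.inner_map_map, h12]
  have hmemK : ∀ z : E, z ∈ K → ⟪z,u1⟫ ≤ 19/2 ∧ ⟪z,u2⟫ ≤ 19/2 := fun z hz => ⟨hz.1.2, hz.2⟩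
  have hnotL : ∀ z : E, z ∉ K → T z ∉ L := by
    intro z hz hzl
    rw [← hT] at hzl
    obtain ⟨y, hyK, hy⟩ := hzl
    exact hz (T.injective hy ▸ hyK)
  have hcases : ∀ z : E, ⟪z,z⟫ = 1 → (10:ℝ) • z ∉ L →
      ⟪z,u1⟫ > 19/20 ∨ ⟪z,-u2⟫ > 19/20 := by
    intro z hzz hzL
    by_contra hcon
    push_neg at hcon
    apply hzL
    refine ⟨⟨?_, ?_⟩, ?_⟩
    · rw [Metric.mem_closedBall, dist_zero_right]
      have : ‖z‖ = 1 := norm_eq_of_inner_self zero_le_one (by rw [hzz]; norm_num)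
      rw [norm_smul, this]; norm_num
    · show ⟪(10:ℝ) • z, u1⟫ ≤ 19/2
      rw [real_inner_smul_left]; linarith [hcon.1]
    · show ⟪(10:ℝ) • z, -u2⟫ ≤ 19/2
      rw [real_inner_smul_left]; linarith [hcon.2]
  have hp10 : (10:ℝ) • p ∉ L := by
    have h1 : (10:ℝ) • u1 ∉ K := by
      intro hmem
      have := (hmemK _ hmem).1
      rw [real_inner_smul_left, h11] at this
      norm_num at this
    have := hnotL _ h1
    rwa [← hfT, _root_.map_smul] at this
  have hq10 : (10:ℝ) • q ∉ L := by
    have h1 : (10:ℝ) • u2 ∉ K := by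
      intro hmem
      have := (hmemK _ hmem).2
      rw [real_inner_smul_left, h22] at this
      norm_num at this
    have := hnotL _ h1
    rwa [← hfT, _root_.map_smul] at this
  have hpcase := hcases p hpp hp10
  have hqcase := hcases q hqq hq10
  have hrpq : ‖p - q‖^2 = 4/5 := by rw [normsq_sub, hpp, hqq, hpq]; norm_num
  have hg : ‖u1 - (-u2)‖^2 = 16/5 := by
    rw [normsq_sub]
    simp only [inner_neg_right, inner_neg_left, neg_neg, h11, h22, h12]
    norm_num
  have hsmall : ∀ z cz : E, ⟪z,z⟫ = 1 → ⟪cz,cz⟫ = 1 → ⟪z,cz⟫ > 19/20 → ‖z - cz‖^2 < 1/10 := by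
    intro z cz hz hcz hzcz
    rw [normsq_sub, hz, hcz]; linarith
  have h1my : ⟪-u2, -u2⟫ = 1 := by rw [inner_neg_neg, h22]
  rcases hpcase with hp1 | hp2 <;> rcases hqcase with hq1 | hq2
  · -- both near u1 : contradiction with ‖p-q‖
    have hs := hsmall p u1 hpp h11 hp1
    have ht := hsmall q u1 hqq h11 hq1
    have htri := dist_triangle p u1 q
    rw [dist_eq_norm, dist_eq_norm, dist_eq_norm, norm_sub_rev u1 q] at htri
    exact arith1 hrpq hs ht (norm_nonneg _) (norm_nonneg _) (norm_nonneg _) htri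
  · -- p near u1, q near -u2 : contradiction with ‖u1 - (-u2)‖
    have hs := hsmall p u1 hpp h11 hp1
    have ht := hsmall q (-u2) hqq h1my hq2
    have htri := dist_triangle4 u1 p q (-u2)
    rw [dist_eq_norm, dist_eq_norm, dist_eq_norm, dist_eq_norm, norm_sub_rev u1 p] at htri
    exact arith2 hg hrpq hs ht (norm_nonneg _) (norm_nonneg _) (norm_nonneg _)
      (norm_nonneg _) htri
  · -- p near -u2, q near u1
    have hs := hsmall p (-u2) hpp h1my hp2
    have ht := hsmall q u1 hqq h11 hq1
    have htri := dist_triangle4 u1 q p (-u2)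
    rw [dist_eq_norm, dist_eq_norm, dist_eq_norm, dist_eq_norm, norm_sub_rev u1 q,
      norm_sub_rev q p] at htri
    exact arith2 hg hrpq ht hs (norm_nonneg _)
      (norm_nonneg _) (norm_nonneg _) (norm_nonneg _) htri
  · -- both near -u2
    have hs := hsmall p (-u2) hpp h1my hp2
    have ht := hsmall q (-u2) hqq h1my hq2
    have htri := dist_triangle p (-u2) q
    rw [dist_eq_norm, dist_eq_norm, dist_eq_norm, norm_sub_rev (-u2) q] at htri
    exact arith1 hrpq hs ht (norm_nonneg _) (norm_nonneg _) (norm_nonneg _) htri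

end Geom

section Main

variable {n : ℕ}
local notation "E" => EuclideanSpace ℝ (Fin n)

set_option maxHeartbeats 1600000 in
theorem exists_noncongruent_equal_intrinsic_volumes_of_slabs {n : ℕ} (hn : 2 ≤ n) :
    ∃ (t : ℝ), 0 < t ∧
    ∃ K L : Set (EuclideanSpace ℝ (Fin n)),
      IsCompact K ∧ Convex ℝ K ∧
      Metric.closedBall (0 : EuclideanSpace ℝ (Fin n)) t ⊆ interior K ∧
      IsCompact L ∧ Convex ℝ L ∧
      Metric.closedBall (0 : EuclideanSpace ℝ (Fin n)) t ⊆ interior L ∧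
      (¬ ∃ T : EuclideanSpace ℝ (Fin n) ≃ᵢ EuclideanSpace ℝ (Fin n), T '' K = L) ∧
      ∀ Vfun : ℕ → Set (EuclideanSpace ℝ (Fin n)) → ℝ, IsIntrinsicVolumes Vfun →
        ∀ i : ℕ, 1 ≤ i → i ≤ n →
          ∀ ξ : EuclideanSpace ℝ (Fin n), ‖ξ‖ = 1 →
            Vfun i (K ∩ slab t ξ) = Vfun i (L ∩ slab t ξ) := by
  classical
  set i0 : Fin n := ⟨0, by omega⟩ with hi0
  set i1 : Fin n := ⟨1, by omega⟩ with hi1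
  have hne : i0 ≠ i1 := by simp [hi0, hi1, Fin.ext_iff]
  set u1 : EuclideanSpace ℝ (Fin n) := EuclideanSpace.single i0 (1:ℝ) with hu1
  set u2 : EuclideanSpace ℝ (Fin n) :=
    (3/5 : ℝ) • EuclideanSpace.single i0 (1:ℝ) + (4/5 : ℝ) • EuclideanSpace.single i1 (1:ℝ)
    with hu2
  set w : EuclideanSpace ℝ (Fin n) := EuclideanSpace.single i1 (10:ℝ) with hw
  have hfacts : ⟪u1,u1⟫ = 1 ∧ ⟪u2,u2⟫ = 1 ∧ ⟪u1,u2⟫ = 3/5 ∧ ⟪w,u1⟫ = 0 ∧ ⟪w,u2⟫ = 8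
      ∧ ⟪w,w⟫ = 100 := by
    refine ⟨?_, ?_, ?_, ?_, ?_, ?_⟩ <;>
    norm_num [hu1, hu2, hw, inner_add_left, inner_add_right, real_inner_smul_left,
      real_inner_smul_right, inner_single_single', if_pos rfl, if_neg hne, if_neg (Ne.symm hne),
        -inner_self_eq_norm_sq_to_K]
  obtain ⟨h11, h22, h12, hw1, hw2, hww⟩ := hfacts
  have h22' : ⟪-u2, -u2⟫ = (1:ℝ) := by rw [inner_neg_neg, h22]
  set Ball : Set (EuclideanSpace ℝ (Fin n)) := Metric.closedBall 0 10 with hBall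
  have hBallcomp : IsCompact Ball := isCompact_closedBall _ _
  -- generic facts about bodies of the form Ball ∩ Hspace a ∩ Hspace b
  have hcomp : ∀ a b : EuclideanSpace ℝ (Fin n), IsCompact (Ball ∩ Hspace a ∩ Hspace b) :=
    fun a b => hBallcomp.of_isClosed_subset
      ((Metric.isClosed_closedBall.inter (isClosed_Hspace a)).inter (isClosed_Hspace b))
      (inter_subset_left.trans inter_subset_left)
  have hconv : ∀ a b : EuclideanSpace ℝ (Fin n), Convex ℝ (Ball ∩ Hspace a ∩ Hspace b) :=
    fun a b => ((convex_closedBall _ _).inter (convex_Hspace a)).inter (convex_Hspace b)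
  have hint : ∀ a b : EuclideanSpace ℝ (Fin n), ⟪a,a⟫ = 1 → ⟪b,b⟫ = 1 →
      Metric.closedBall (0 : EuclideanSpace ℝ (Fin n)) 1
        ⊆ interior (Ball ∩ Hspace a ∩ Hspace b) := by
    intro a b haa hbb
    have hna : ‖a‖ = 1 := norm_eq_of_inner_self zero_le_one (by rw [haa]; norm_num)
    have hnb : ‖b‖ = 1 := norm_eq_of_inner_self zero_le_one (by rw [hbb]; norm_num)
    set U : Set (EuclideanSpace ℝ (Fin n)) :=
      Metric.ball 0 10 ∩ {x | ⟪x,a⟫ < 19/2} ∩ {x | ⟪x,b⟫ < 19/2} with hU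
    have hUopen : IsOpen U :=
      ((Metric.isOpen_ball.inter (isOpen_lt (continuous_id.inner continuous_const)
        continuous_const)).inter (isOpen_lt (continuous_id.inner continuous_const)
        continuous_const))
    have hUsub : U ⊆ Ball ∩ Hspace a ∩ Hspace b := by
      rintro x ⟨⟨hx1, hx2⟩, hx3⟩
      refine ⟨⟨Metric.ball_subset_closedBall hx1, ?_⟩, ?_⟩
      · show ⟪x,a⟫ ≤ 19/2
        exact le_of_lt hx2
      · show ⟪x,b⟫ ≤ 19/2
        exact le_of_lt hx3
    intro x hx
    have hx1 : ‖x‖ ≤ 1 := by rwa [Metric.mem_closedBall, dist_zero_right] at hx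
    have hia := real_inner_le_norm x a
    have hib := real_inner_le_norm x b
    rw [hna, mul_one] at hia
    rw [hnb, mul_one] at hib
    apply interior_maximal hUsub hUopen
    refine ⟨⟨?_, ?_⟩, ?_⟩
    · rw [Metric.mem_ball, dist_zero_right]; linarith
    · show ⟪x,a⟫ < 19/2; linarith
    · show ⟪x,b⟫ < 19/2; linarith
  refine ⟨1, one_pos, Ball ∩ Hspace u1 ∩ Hspace u2, Ball ∩ Hspace u1 ∩ Hspace (-u2),
    hcomp u1 u2, hconv u1 u2, hint u1 u2 h11 h22,
    hcomp u1 (-u2), hconv u1 (-u2), hint u1 (-u2) h11 h22',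
    noncongruent u1 u2 w h11 h22 h12 hw1 hw2 hww, ?_⟩
  intro Vfun hV i hi1 hin ξ hξ
  set KS : Set (EuclideanSpace ℝ (Fin n)) := Ball ∩ Hspace u1 ∩ Hspace u2 ∩ slab 1 ξ with hKS
  set LS : Set (EuclideanSpace ℝ (Fin n)) := Ball ∩ Hspace u1 ∩ Hspace (-u2) ∩ slab 1 ξ
    with hLS
  set B1 : Set (EuclideanSpace ℝ (Fin n)) := Metric.closedBall 0 1 with hB1
  -- the crucial volume identity
  have hvol : ∀ ε : ℝ, 0 ≤ ε → volume (KS + ε • B1) = volume (LS + ε • B1) := by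
    intro ε hε
    set M : Set (EuclideanSpace ℝ (Fin n)) := ε • B1 with hM
    have hMconv : Convex ℝ M := (convex_closedBall _ _).smul ε
    have hMcomp : IsCompact M := (isCompact_closedBall _ _).smul ε
    have e1 := vol_inter_add ξ u1 u2
      (cover_of_inner u1 u2 h11 h22 (by rw [h12]; norm_num)) M hMconv hMcomp
    have e2 := vol_inter_add ξ u1 (-u2)
      (cover_of_inner u1 (-u2) h11 h22' (by rw [inner_neg_right, h12]; norm_num))
      M hMconv hMcomp
    have hDD : volume ((Ball ∩ slab 1 ξ ∩ Hspace (-u2)) + M)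
        = volume ((Ball ∩ slab 1 ξ ∩ Hspace u2) + M) := by
      have hmb : ∀ y : EuclideanSpace ℝ (Fin n), (-y ∈ Ball) ↔ y ∈ Ball := by
        intro y
        rw [hBall, Metric.mem_closedBall, Metric.mem_closedBall, dist_zero_right,
          dist_zero_right, norm_neg]
      have hms : ∀ y : EuclideanSpace ℝ (Fin n), (-y ∈ slab 1 ξ) ↔ y ∈ slab 1 ξ := by
        intro y
        show |⟪-y,ξ⟫| ≤ 1 ↔ |⟪y,ξ⟫| ≤ 1
        rw [inner_neg_left, abs_neg]
      have hmh : ∀ y : EuclideanSpace ℝ (Fin n), (-y ∈ Hspace u2) ↔ y ∈ Hspace (-u2) := by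
        intro y
        show ⟪-y,u2⟫ ≤ 19/2 ↔ ⟪y,-u2⟫ ≤ 19/2
        rw [inner_neg_left, inner_neg_right]
      have hset : Ball ∩ slab 1 ξ ∩ Hspace (-u2) = -(Ball ∩ slab 1 ξ ∩ Hspace u2) := by
        ext x
        rw [Set.mem_neg, mem_inter_iff, mem_inter_iff, mem_inter_iff, mem_inter_iff,
          hmb, hms, hmh]
      have hBneg : -B1 = B1 := by
        ext x
        simp [hB1, Set.mem_neg, Metric.mem_closedBall, dist_zero_right]
      have hMneg : -M = M := by
        rw [hM, ← Set.smul_set_neg, hBneg]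
      calc volume ((Ball ∩ slab 1 ξ ∩ Hspace (-u2)) + M)
          = volume ((-(Ball ∩ slab 1 ξ ∩ Hspace u2)) + (-M)) := by rw [hset, hMneg]
        _ = volume (-((Ball ∩ slab 1 ξ ∩ Hspace u2) + M)) := by rw [neg_add_rev, add_comm]
        _ = volume ((Ball ∩ slab 1 ξ ∩ Hspace u2) + M) := Measure.measure_neg volume _
    rw [hDD] at e2
    have hAcomp : IsCompact (Ball ∩ slab 1 ξ) :=
      hBallcomp.of_isClosed_subset (Metric.isClosed_closedBall.inter (isClosed_slab 1 ξ))
        inter_subset_left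
    have hAfin : volume ((Ball ∩ slab 1 ξ) + M) ≠ ⊤ :=
      (hAcomp.add hMcomp).measure_lt_top.ne
    have heq : volume (KS + M) + volume ((Ball ∩ slab 1 ξ) + M)
        = volume (LS + M) + volume ((Ball ∩ slab 1 ξ) + M) := by
      rw [hKS, hLS]; rw [e1, e2]
    rw [add_comm (volume (KS + M)) _, add_comm (volume (LS + M)) _] at heq
    exact (ENNReal.add_right_inj hAfin).mp heq
  -- nonemptiness, compactness, convexity of the slab sections
  have hzero : ∀ a b : EuclideanSpace ℝ (Fin n),
      (0 : EuclideanSpace ℝ (Fin n)) ∈ Ball ∩ Hspace a ∩ Hspace b ∩ slab 1 ξ := by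
    intro a b
    refine ⟨⟨⟨?_, ?_⟩, ?_⟩, ?_⟩
    · rw [hBall, Metric.mem_closedBall, dist_self]; norm_num
    · show ⟪(0 : EuclideanSpace ℝ (Fin n)),a⟫ ≤ 19/2; rw [inner_zero_left]; norm_num
    · show ⟪(0 : EuclideanSpace ℝ (Fin n)),b⟫ ≤ 19/2; rw [inner_zero_left]; norm_num
    · show |⟪(0 : EuclideanSpace ℝ (Fin n)),ξ⟫| ≤ 1; rw [inner_zero_left]; norm_num
  have hseccomp : ∀ a b : EuclideanSpace ℝ (Fin n),
      IsCompact (Ball ∩ Hspace a ∩ Hspace b ∩ slab 1 ξ) := by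
    intro a b
    exact (hcomp a b).of_isClosed_subset
      ((((Metric.isClosed_closedBall.inter (isClosed_Hspace a)).inter (isClosed_Hspace b)).inter
        (isClosed_slab 1 ξ))) inter_subset_left
  have hsecconv : ∀ a b : EuclideanSpace ℝ (Fin n),
      Convex ℝ (Ball ∩ Hspace a ∩ Hspace b ∩ slab 1 ξ) :=
    fun a b => (hconv a b).inter (convex_slab 1 ξ)
  have hs1 := hV KS (hseccomp u1 u2) (hsecconv u1 u2) ⟨0, hzero u1 u2⟩
  have hs2 := hV LS (hseccomp u1 (-u2)) (hsecconv u1 (-u2)) ⟨0, hzero u1 (-u2)⟩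
  have hsum : ∀ ε : ℝ, 0 ≤ ε →
      ∑ j ∈ Finset.range (n + 1), kball (n - j) * Vfun j KS * ε ^ (n - j)
        = ∑ j ∈ Finset.range (n + 1), kball (n - j) * Vfun j LS * ε ^ (n - j) := by
    intro ε hε
    rw [← hs1 ε hε, ← hs2 ε hε]
    exact congrArg ENNReal.toReal (hvol ε hε)
  have hcoeff := coeff_eq_of_sum_eq (fun j => kball (n - j) * Vfun j KS)
    (fun j => kball (n - j) * Vfun j LS) hsum i hin
  exact mul_left_cancel₀ (kball_pos (n - i)).ne' hcoeff

end Main
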